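/- Let y ∈ ℝⁿ with ‖y‖₂ < ‖y‖₁/β, let S₁,…,S_r be a random partition of [n] into r bins (each index independently uniform among bins), and let γ_j = ∑_{i∈S_j}|y_i|. Fix k > 1 and let E be the event that at least r/k of the values γ_j are at most ‖y‖₁/(2r). Then P(E) ≤ exp(−β²/(8k) + (r/k)(1 + ln k)). -/

import Mathlib

open MeasureTheory ProbabilityTheory Finset

lemma hasDeriv_aux (x : ℝ) : HasDerivAt (fun x : ℝ => 1 - x + x ^ 2 / 2 - Real.exp (-x)) (-1 + x - -Real.exp (-x)) x := by
  have h1 : HasDerivAt (fun x : ℝ => Real.exp (-x)) (-Real.exp (-x)) x := by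
    have := (hasDerivAt_neg x).exp; rw [mul_neg_one] at this; exact this
  have h2 : HasDerivAt (fun x : ℝ => 1 - x + x ^ 2 / 2) (-1 + x) x := by
    have := ((hasDerivAt_pow 2 x).div_const 2)
    have h3 := ((hasDerivAt_const x (1:ℝ)).sub (hasDerivAt_id x)).add this
    exact h3.congr_deriv (by norm_num)
  exact h2.sub h1

lemma exp_neg_le_quad {s : ℝ} (hs : 0 ≤ s) : Real.exp (-s) ≤ 1 - s + s ^ 2 / 2 := by
  have mono : MonotoneOn (fun x : ℝ => 1 - x + x ^ 2 / 2 - Real.exp (-x)) (Set.Ici 0) := by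
    apply monotoneOn_of_deriv_nonneg (convex_Ici 0)
    · exact (by continuity : Continuous fun x : ℝ => 1 - x + x ^ 2 / 2 - Real.exp (-x)).continuousOn
    · intro x _
      exact (hasDeriv_aux x).differentiableAt.differentiableWithinAt
    · intro x hx
      rw [(hasDeriv_aux x).deriv]
      have := Real.add_one_le_exp (-x)
      nlinarith
  have h0 := mono (Set.self_mem_Ici) (Set.mem_Ici.2 hs) hs
  simp only [Real.exp_zero, neg_zero] at h0
  nlinarith [h0]

lemma subset_chernoff {Ω : Type*} [MeasurableSpace Ω] (P : Measure Ω) [IsProbabilityMeasure P]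
    (n r : ℕ) (hr : 0 < r) (y : Fin n → ℝ)
    (σ : Ω → Fin n → Fin r) (hmeas : ∀ i, Measurable fun ω => σ ω i)
    (hindep : iIndepFun (fun i ω => σ ω i) P)
    (hunif : ∀ i, Measure.map (fun ω => σ ω i) P = (r : ENNReal)⁻¹ • Measure.count)
    (hV : 0 < ∑ i, (y i) ^ 2) (β : ℝ)
    (hβV : β ^ 2 * (∑ i, (y i) ^ 2) ≤ (∑ i, |y i|) ^ 2)
    (I : Finset (Fin r)) :
    P {ω | ∑ i, |y i| * (if σ ω i ∈ I then (1:ℝ) else 0)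
          ≤ (I.card : ℝ) * ((∑ i, |y i|) / (2 * r))}
      ≤ ENNReal.ofReal (Real.exp (-(((I.card : ℝ)) / r) * (β ^ 2 / 8))) := by
  set L1 := ∑ i, |y i| with hL1def
  set V := ∑ i, (y i) ^ 2 with hVdef
  have hL1 : 0 ≤ L1 := Finset.sum_nonneg fun i _ => abs_nonneg _
  set t₀ : ℝ := L1 / (2 * V) with ht₀def
  have ht₀ : 0 ≤ t₀ := by positivity
  have hrR : (0:ℝ) < r := by exact_mod_cast hr
  set m := I.card with hmdef
  have hmr : m ≤ r := by
    have := Finset.card_le_univ I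
    simpa using this
  set g : Fin n → Fin r → ℝ := fun i j => |y i| * (if j ∈ I then 1 else 0) with hgdef
  have hg : ∀ i, Measurable (g i) := fun i => measurable_of_countable _
  set X : Fin n → Ω → ℝ := fun i ω => g i (σ ω i) with hXdef
  have hXmeas : ∀ i, Measurable (X i) := fun i => (hg i).comp (hmeas i)
  have hXindep : iIndepFun X P := hindep.comp g hg
  have hXnn : ∀ i ω, 0 ≤ X i ω := by
    intro i ω
    simp only [hXdef, hgdef]
    positivity
  have hSnn : ∀ ω, 0 ≤ (∑ i : Fin n, X i) ω := by
    intro ω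
    rw [Finset.sum_apply]
    exact Finset.sum_nonneg fun i _ => hXnn i ω
  set ε : ℝ := (m : ℝ) * (L1 / (2 * r)) with hεdef
  -- integrability
  have hbdd : ∀ (f : Ω → ℝ), Measurable f → (∀ ω, 0 ≤ f ω) →
      Integrable (fun ω => Real.exp (-t₀ * f ω)) P := by
    intro f hf hfnn
    refine Integrable.mono' (integrable_const (1:ℝ)) ((hf.const_mul (-t₀)).exp.aestronglyMeasurable) (ae_of_all _ fun ω => ?_)
    rw [Real.norm_eq_abs, abs_of_pos (Real.exp_pos _)]
    have h1 : -t₀ * f ω ≤ 0 := mul_nonpos_of_nonpos_of_nonneg (neg_nonpos.2 ht₀) (hfnn ω)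
    simpa using Real.exp_le_exp.2 h1
  have hSmeas : Measurable (∑ i : Fin n, X i) := by
    have := Finset.measurable_sum (Finset.univ : Finset (Fin n)) fun i _ => hXmeas i
    convert this using 1
    ext a
    simp [Finset.sum_apply]
  have hintS : Integrable (fun ω => Real.exp (-t₀ * (∑ i : Fin n, X i) ω)) P :=
    hbdd _ hSmeas hSnn
  -- Chernoff
  have hcher := measure_le_le_exp_mul_mgf (μ := P) (X := ∑ i : Fin n, X i) ε
      (t := -t₀) (neg_nonpos.2 ht₀) hintS
  rw [neg_neg] at hcher
  -- mgf of each coordinate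
  have hXi_mgf : ∀ i, mgf (X i) P (-t₀)
      = 1 + ((m : ℝ) / r) * (Real.exp (-(t₀ * |y i|)) - 1) := by
    intro i
    have hmap : mgf (X i) P (-t₀) = ∫ j, Real.exp (-t₀ * g i j) ∂(Measure.map (fun ω => σ ω i) P) := by
      rw [mgf, integral_map (hmeas i).aemeasurable (measurable_of_countable _).aestronglyMeasurable]
    rw [hmap, hunif i, integral_smul_measure, integral_fintype _]
    simp only [Measure.real, Measure.count_singleton, ENNReal.toReal_one, one_smul]
    have hsum : ∑ j : Fin r, Real.exp (-t₀ * g i j)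
        = (m : ℝ) * Real.exp (-(t₀ * |y i|)) + ((r : ℝ) - m) := by
      have : ∀ j : Fin r, Real.exp (-t₀ * g i j)
          = if j ∈ I then Real.exp (-(t₀ * |y i|)) else 1 := by
        intro j
        by_cases hj : j ∈ I
        · rw [if_pos hj]
          simp only [hgdef, if_pos hj, mul_one]
          congr 1
          ring
        · rw [if_neg hj]
          simp [hgdef, hj]
      rw [Finset.sum_congr rfl fun j _ => this j, Finset.sum_ite, Finset.sum_const, Finset.sum_const]
      have h1 : Finset.univ.filter (fun j : Fin r => j ∈ I) = I := by
        ext j; simp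
      have h2 : (Finset.univ.filter (fun j : Fin r => j ∉ I)) = Iᶜ := by
        ext j; simp
      rw [h1, h2, Finset.card_compl]
      simp only [nsmul_eq_mul, mul_one, Fintype.card_fin]
      rw [Nat.cast_sub hmr]
    rw [hsum]
    have hne : (r:ℝ) ≠ 0 := ne_of_gt hrR
    have htor : ((r : ENNReal)⁻¹).toReal = (r:ℝ)⁻¹ := by
      simp [ENNReal.toReal_inv]
    rw [htor, smul_eq_mul]
    field_simp
    ring
    exact Integrable.of_finite
  have hXi_le : ∀ i, mgf (X i) P (-t₀)
      ≤ Real.exp (((m : ℝ) / r) * (Real.exp (-(t₀ * |y i|)) - 1)) := by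
    intro i
    rw [hXi_mgf i]
    have := Real.add_one_le_exp (((m : ℝ) / r) * (Real.exp (-(t₀ * |y i|)) - 1))
    linarith
  have hmgf := hXindep.mgf_sum (t := -t₀) hXmeas Finset.univ
  have hprod : mgf (∑ i : Fin n, X i) P (-t₀)
      ≤ Real.exp (∑ i : Fin n, ((m : ℝ) / r) * (Real.exp (-(t₀ * |y i|)) - 1)) := by
    rw [hmgf, Real.exp_sum]
    exact Finset.prod_le_prod (fun i _ => mgf_nonneg) (fun i _ => hXi_le i)
  have hsum_le : ∑ i : Fin n, ((m : ℝ) / r) * (Real.exp (-(t₀ * |y i|)) - 1)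
      ≤ ((m : ℝ) / r) * (-(t₀ * L1) + t₀ ^ 2 / 2 * V) := by
    rw [← Finset.mul_sum]
    refine mul_le_mul_of_nonneg_left ?_ (by positivity)
    calc ∑ i : Fin n, (Real.exp (-(t₀ * |y i|)) - 1)
        ≤ ∑ i : Fin n, (-(t₀ * |y i|) + t₀ ^ 2 / 2 * (y i) ^ 2) := by
          refine Finset.sum_le_sum fun i _ => ?_
          have h := exp_neg_le_quad (s := t₀ * |y i|) (by positivity)
          have h2 : (t₀ * |y i|) ^ 2 = t₀ ^ 2 * (y i) ^ 2 := by
            rw [mul_pow, sq_abs]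
          nlinarith
      _ = -(t₀ * L1) + t₀ ^ 2 / 2 * V := by
          rw [hL1def, hVdef, Finset.sum_add_distrib]
          congr 1
          · rw [Finset.mul_sum, Finset.sum_neg_distrib]
          · rw [Finset.mul_sum]
  -- final exponent computation
  have hVne : V ≠ 0 := ne_of_gt hV
  have hfinal : t₀ * ε + ((m : ℝ) / r) * (-(t₀ * L1) + t₀ ^ 2 / 2 * V)
      ≤ -(((m : ℝ)) / r) * (β ^ 2 / 8) := by
    have e : t₀ * ε + ((m : ℝ) / r) * (-(t₀ * L1) + t₀ ^ 2 / 2 * V)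
        = -(((m : ℝ)) / r) * (L1 ^ 2 / (8 * V)) := by
      rw [hεdef, ht₀def]
      field_simp [hVne, hrR.ne']
      ring
    rw [e]
    have h1 : β ^ 2 / 8 ≤ L1 ^ 2 / (8 * V) := by
      rw [div_le_div_iff₀ (by norm_num : (0:ℝ) < 8) (by positivity : (0:ℝ) < 8 * V)]
      nlinarith
    have h2 := mul_le_mul_of_nonneg_left h1
      (div_nonneg (Nat.cast_nonneg m) (le_of_lt hrR))
    linarith
  -- combine
  have hchain : (P {ω | (∑ i : Fin n, X i) ω ≤ ε}).toReal
      ≤ Real.exp (-(((m : ℝ)) / r) * (β ^ 2 / 8)) := by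
    refine hcher.trans ?_
    calc Real.exp (t₀ * ε) * mgf (∑ i : Fin n, X i) P (-t₀)
        ≤ Real.exp (t₀ * ε) * Real.exp (((m : ℝ) / r) * (-(t₀ * L1) + t₀ ^ 2 / 2 * V)) := by
          refine mul_le_mul_of_nonneg_left (hprod.trans (Real.exp_le_exp.2 hsum_le)) (Real.exp_pos _).le
      _ = Real.exp (t₀ * ε + ((m : ℝ) / r) * (-(t₀ * L1) + t₀ ^ 2 / 2 * V)) := (Real.exp_add _ _).symm
      _ ≤ _ := Real.exp_le_exp.2 hfinal
  have hset : {ω | ∑ i, |y i| * (if σ ω i ∈ I then (1:ℝ) else 0)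
      ≤ (I.card : ℝ) * ((∑ i, |y i|) / (2 * r))} = {ω | (∑ i : Fin n, X i) ω ≤ ε} := by
    ext ω
    simp only [Set.mem_setOf_eq, Finset.sum_apply]
    exact Iff.rfl
  rw [hset]
  calc P {ω | (∑ i : Fin n, X i) ω ≤ ε}
      = ENNReal.ofReal (P {ω | (∑ i : Fin n, X i) ω ≤ ε}).toReal :=
        (ENNReal.ofReal_toReal (measure_ne_top P _)).symm
    _ ≤ _ := ENNReal.ofReal_le_ofReal hchain


/-- joint lower-tail bound for a random partition.  `E` is the event
that at least `r/k` of the bin-masses `γ_j = ∑_{i ∈ S_j} |y_i|` are at most `‖y‖₁/(2r)`. -/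
theorem stmt10 {Ω : Type*} [MeasurableSpace Ω] (P : Measure Ω) [IsProbabilityMeasure P]
    (n r : ℕ) (hr : 0 < r) (y : Fin n → ℝ) (β : ℝ) (hβ : 0 < β)
    (σ : Ω → Fin n → Fin r) (hmeas : ∀ i, Measurable fun ω => σ ω i)
    (hindep : iIndepFun (fun i ω => σ ω i) P)
    (hunif : ∀ i, Measure.map (fun ω => σ ω i) P = (r : ENNReal)⁻¹ • Measure.count)
    (hdense : Real.sqrt (∑ i, (y i) ^ 2) < (∑ i, |y i|) / β)
    (k : ℝ) (hk : 1 < k) :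
    P {ω | (r : ℝ) / k ≤
        ((Finset.univ.filter fun j : Fin r =>
            (∑ i ∈ Finset.univ.filter (fun i => σ ω i = j), |y i|)
              ≤ (∑ i, |y i|) / (2 * r)).card : ℝ)}
      ≤ ENNReal.ofReal (Real.exp (-β ^ 2 / (8 * k) + (r / k) * (1 + Real.log k))) := by
  have hk0 : (0:ℝ) < k := lt_trans one_pos hk
  have hlogk : 0 < Real.log k := Real.log_pos hk
  set c : ℝ := 1 + Real.log k with hcdef
  have hc : 0 < c := by positivity
  have hrR : (0:ℝ) < r := by exact_mod_cast hr
  by_cases hcase : β ^ 2 ≤ 8 * r * c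
  · -- trivial case: RHS ≥ 1
    have h0 : (0:ℝ) ≤ -β ^ 2 / (8 * k) + (r / k) * c := by
      have he : -β ^ 2 / (8 * k) + ((r:ℝ) / k) * c = (8 * r * c - β ^ 2) / (8 * k) := by
        field_simp
        ring
      rw [he]
      exact div_nonneg (by linarith) (by positivity)
    calc P _ ≤ 1 := prob_le_one
      _ = ENNReal.ofReal 1 := by simp
      _ ≤ _ := by
        apply ENNReal.ofReal_le_ofReal
        rw [show (1:ℝ) = Real.exp 0 from (Real.exp_zero).symm]
        exact Real.exp_le_exp.2 h0
  · push_neg at hcase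
    -- basic facts about y
    set L1 := ∑ i, |y i| with hL1def
    set V := ∑ i, (y i) ^ 2 with hVdef
    have hVnn : 0 ≤ V := Finset.sum_nonneg fun i _ => sq_nonneg _
    have hsqr : Real.sqrt V * β < L1 := (lt_div_iff₀ hβ).1 hdense
    have hL1 : 0 < L1 :=
      lt_of_le_of_lt (mul_nonneg (Real.sqrt_nonneg V) hβ.le) hsqr
    have hV : 0 < V := by
      rcases hVnn.lt_or_eq with h | h
      · exact h
      · exfalso
        have hy : ∀ i ∈ Finset.univ, (y i) ^ 2 = 0 :=
          (Finset.sum_eq_zero_iff_of_nonneg (fun i _ => sq_nonneg _)).1 h.symm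
        have : L1 = 0 := Finset.sum_eq_zero fun i _ => by
          have := hy i (Finset.mem_univ i)
          have : y i = 0 := by nlinarith [this]
          simp [this]
        exact absurd this (ne_of_gt hL1)
    have hβV : β ^ 2 * V ≤ L1 ^ 2 := by
      nlinarith [Real.sq_sqrt hVnn, Real.sqrt_nonneg V,
        mul_nonneg (Real.sqrt_nonneg V) hβ.le]
    -- the subset size
    set m : ℕ := ⌈(r : ℝ) / k⌉₊ with hmdef
    have hm_ge : (r : ℝ) / k ≤ m := Nat.le_ceil _
    have hm_le : m ≤ r := by
      rw [hmdef, Nat.ceil_le]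
      push_cast
      exact div_le_self hrR.le hk.le
    have hm_pos : 0 < m := by
      rw [hmdef, Nat.ceil_pos]
      positivity
    have hmR : (0:ℝ) < m := by exact_mod_cast hm_pos
    have hrkm : (r : ℝ) ≤ k * m := by
      rw [div_le_iff₀ hk0] at hm_ge
      linarith [hm_ge]
    -- inclusion in a union over subsets of size m
    have hincl : {ω | (r : ℝ) / k ≤
        ((Finset.univ.filter fun j : Fin r =>
            (∑ i ∈ Finset.univ.filter (fun i => σ ω i = j), |y i|)
              ≤ (∑ i, |y i|) / (2 * r)).card : ℝ)}
        ⊆ ⋃ I ∈ Finset.powersetCard m (Finset.univ : Finset (Fin r)),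
            {ω | ∑ i, |y i| * (if σ ω i ∈ I then (1:ℝ) else 0)
              ≤ (I.card : ℝ) * ((∑ i, |y i|) / (2 * r))} := by
      intro ω hω
      simp only [Set.mem_setOf_eq] at hω
      have hcard : m ≤ (Finset.univ.filter fun j : Fin r =>
          (∑ i ∈ Finset.univ.filter (fun i => σ ω i = j), |y i|)
            ≤ (∑ i, |y i|) / (2 * r)).card := Nat.ceil_le.2 hω
      obtain ⟨I, hIsub, hIcard⟩ := Finset.exists_subset_card_eq hcard
      refine Set.mem_iUnion₂.2 ⟨I, Finset.mem_powersetCard.2 ⟨Finset.subset_univ I, hIcard⟩, ?_⟩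
      simp only [Set.mem_setOf_eq]
      have key : ∑ i, |y i| * (if σ ω i ∈ I then (1:ℝ) else 0)
          = ∑ j ∈ I, ∑ i ∈ Finset.univ.filter (fun i => σ ω i = j), |y i| := by
        have h1 : ∀ j ∈ I, ∑ i ∈ Finset.univ.filter (fun i => σ ω i = j), |y i|
            = ∑ i : Fin n, if σ ω i = j then |y i| else 0 := fun j _ =>
          (Finset.sum_filter _ _)
        rw [Finset.sum_congr rfl h1, Finset.sum_comm]
        refine Finset.sum_congr rfl fun i _ => ?_
        rw [Finset.sum_ite_eq I (σ ω i) (fun _ => |y i|)]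
        by_cases h : σ ω i ∈ I <;> simp [h]
      rw [key]
      calc ∑ j ∈ I, ∑ i ∈ Finset.univ.filter (fun i => σ ω i = j), |y i|
          ≤ ∑ _j ∈ I, (∑ i, |y i|) / (2 * r) :=
            Finset.sum_le_sum fun j hj => (Finset.mem_filter.1 (hIsub hj)).2
        _ = (I.card : ℝ) * ((∑ i, |y i|) / (2 * r)) := by
            rw [Finset.sum_const, nsmul_eq_mul]
    -- union bound
    have hbound : ∀ I ∈ Finset.powersetCard m (Finset.univ : Finset (Fin r)),
        P {ω | ∑ i, |y i| * (if σ ω i ∈ I then (1:ℝ) else 0)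
          ≤ (I.card : ℝ) * ((∑ i, |y i|) / (2 * r))}
        ≤ ENNReal.ofReal (Real.exp (-((m : ℝ) / r) * (β ^ 2 / 8))) := by
      intro I hI
      have hIcard : I.card = m := (Finset.mem_powersetCard.1 hI).2
      have := subset_chernoff P n r hr y σ hmeas hindep hunif hV β hβV I
      rw [hIcard] at this ⊢
      exact this
    have hunion : P {ω | (r : ℝ) / k ≤
        ((Finset.univ.filter fun j : Fin r =>
            (∑ i ∈ Finset.univ.filter (fun i => σ ω i = j), |y i|)
              ≤ (∑ i, |y i|) / (2 * r)).card : ℝ)}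
        ≤ (r.choose m : ENNReal) * ENNReal.ofReal (Real.exp (-((m : ℝ) / r) * (β ^ 2 / 8))) := by
      calc P _ ≤ P (⋃ I ∈ Finset.powersetCard m (Finset.univ : Finset (Fin r)),
            {ω | ∑ i, |y i| * (if σ ω i ∈ I then (1:ℝ) else 0)
              ≤ (I.card : ℝ) * ((∑ i, |y i|) / (2 * r))}) := measure_mono hincl
        _ ≤ ∑ I ∈ Finset.powersetCard m (Finset.univ : Finset (Fin r)),
            P {ω | ∑ i, |y i| * (if σ ω i ∈ I then (1:ℝ) else 0)
              ≤ (I.card : ℝ) * ((∑ i, |y i|) / (2 * r))} := measure_biUnion_finset_le _ _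
        _ ≤ ∑ _I ∈ Finset.powersetCard m (Finset.univ : Finset (Fin r)),
            ENNReal.ofReal (Real.exp (-((m : ℝ) / r) * (β ^ 2 / 8))) :=
            Finset.sum_le_sum hbound
        _ = (r.choose m : ENNReal) * ENNReal.ofReal (Real.exp (-((m : ℝ) / r) * (β ^ 2 / 8))) := by
            rw [Finset.sum_const, Finset.card_powersetCard, nsmul_eq_mul]
            simp
    refine hunion.trans ?_
    rw [show ((r.choose m : ℕ) : ENNReal) = ENNReal.ofReal (r.choose m : ℝ) by
        simp [ENNReal.ofReal_natCast],
      ← ENNReal.ofReal_mul (by positivity)]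
    apply ENNReal.ofReal_le_ofReal
    -- real inequality
    have hchoose : (r.choose m : ℝ) ≤ Real.exp ((m : ℝ) * c) := by
      have h1 : (r.choose m : ℝ) ≤ (r : ℝ) ^ m / (m.factorial : ℝ) :=
        Nat.choose_le_pow_div m r
      have h2 : ((m : ℝ)) ^ m / (m.factorial : ℝ) ≤ Real.exp m :=
        Real.pow_div_factorial_le_exp (x := (m:ℝ)) (Nat.cast_nonneg m) m
      have h3 : (r : ℝ) ^ m ≤ k ^ m * (m : ℝ) ^ m := by
        rw [← mul_pow]
        exact pow_le_pow_left₀ hrR.le hrkm m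
      have hfacpos : (0:ℝ) < (m.factorial : ℝ) := by
        exact_mod_cast m.factorial_pos
      have h4 : (r : ℝ) ^ m / (m.factorial : ℝ) ≤ k ^ m * Real.exp m := by
        calc (r : ℝ) ^ m / (m.factorial : ℝ)
            ≤ (k ^ m * (m : ℝ) ^ m) / (m.factorial : ℝ) := by gcongr
          _ = k ^ m * ((m : ℝ) ^ m / (m.factorial : ℝ)) := by ring
          _ ≤ k ^ m * Real.exp m :=
              mul_le_mul_of_nonneg_left h2 (by positivity)
      have h5 : k ^ m * Real.exp m = Real.exp ((m : ℝ) * c) := by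
        have hk5 : k ^ m = Real.exp ((m : ℝ) * Real.log k) := by
          rw [Real.exp_nat_mul, Real.exp_log hk0]
        rw [hk5, ← Real.exp_add, hcdef]
        congr 1
        ring
      linarith [h1.trans (h4.trans_eq h5)]
    have hexpineq : (m : ℝ) * c + (-((m : ℝ) / r) * (β ^ 2 / 8))
        ≤ -β ^ 2 / (8 * k) + ((r : ℝ) / k) * c := by
      have hkey : 8 * (r:ℝ) * k * ((m : ℝ) * c + (-((m : ℝ) / r) * (β ^ 2 / 8)))
          ≤ 8 * (r:ℝ) * k * (-β ^ 2 / (8 * k) + ((r : ℝ) / k) * c) := by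
        have e1 : 8 * (r:ℝ) * k * ((m : ℝ) * c + (-((m : ℝ) / r) * (β ^ 2 / 8)))
            = 8 * r * k * m * c - k * m * β ^ 2 := by
          field_simp
          ring
        have e2 : 8 * (r:ℝ) * k * (-β ^ 2 / (8 * k) + ((r : ℝ) / k) * c)
            = 8 * r ^ 2 * c - r * β ^ 2 := by
          field_simp
          ring
        rw [e1, e2]
        nlinarith [mul_nonneg (sub_nonneg.2 hrkm) (sub_nonneg.2 hcase.le)]
      exact le_of_mul_le_mul_left hkey (by positivity)
    calc (r.choose m : ℝ) * Real.exp (-((m : ℝ) / r) * (β ^ 2 / 8))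
        ≤ Real.exp ((m : ℝ) * c) * Real.exp (-((m : ℝ) / r) * (β ^ 2 / 8)) :=
          mul_le_mul_of_nonneg_right hchoose (Real.exp_pos _).le
      _ = Real.exp ((m : ℝ) * c + (-((m : ℝ) / r) * (β ^ 2 / 8))) := (Real.exp_add _ _).symm
      _ ≤ Real.exp (-β ^ 2 / (8 * k) + ((r : ℝ) / k) * c) := Real.exp_le_exp.2 hexpineq
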